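/- (Closed-form expression of the star L²-discrepancy.) Let X = (x^(1),…,x^(N)) be a design of N ≥ 1 points in [0,1]^d. Then the square of the star L²-discrepancy admits the closed form: ∫_{[0,1]^d} [ (1/N) #{ i : x^(i) ∈ [0,y] } − Π_{k=1}^d y_k ]² dy = 3^(−d) − (2/N) Σ_{i=1}^N Π_{k=1}^d (1 − (x_k^(i))²)/2 + (1/N²) Σ_{i=1}^N Σ_{j=1}^N Π_{k=1}^d (1 − max(x_k^(i), x_k^(j))), where #{ i : x^(i) ∈ [0,y] } denotes the number of indices i such that x_k^(i) ≤ y_k for all k = 1,…,d, and the integral is the Lebesgue integral over the unit cube. -/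

import Mathlib

open Finset MeasureTheory

lemma indicator_pi_prod {d : ℕ} (f : Fin d → ℝ → ℝ) :
    (Set.univ.pi (fun _ : Fin d => Set.Icc (0:ℝ) 1)).indicator
      (fun y => ∏ k, f k (y k))
      = fun y => ∏ k, (Set.Icc (0:ℝ) 1).indicator (f k) (y k) := by
  funext y
  by_cases h : y ∈ Set.univ.pi (fun _ : Fin d => Set.Icc (0:ℝ) 1)
  · rw [Set.indicator_of_mem h]
    exact Finset.prod_congr rfl fun k _ =>
      (Set.indicator_of_mem (h k (Set.mem_univ k)) _).symm
  · rw [Set.indicator_of_notMem h]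
    simp only [Set.mem_pi, Set.mem_univ, forall_true_left] at h
    push_neg at h
    obtain ⟨k, hk⟩ := h
    exact (Finset.prod_eq_zero (Finset.mem_univ k)
      (Set.indicator_of_notMem hk _)).symm

lemma cube_prod_integral {d : ℕ} (f : Fin d → ℝ → ℝ) :
    ∫ y in Set.univ.pi (fun _ : Fin d => Set.Icc (0:ℝ) 1), ∏ k, f k (y k)
      = ∏ k, ∫ t in Set.Icc (0:ℝ) 1, f k t := by
  have hS : MeasurableSet (Set.univ.pi (fun _ : Fin d => Set.Icc (0:ℝ) 1)) :=
    MeasurableSet.univ_pi fun _ => measurableSet_Icc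
  rw [← integral_indicator hS, indicator_pi_prod, MeasureTheory.volume_pi,
    MeasureTheory.integral_fintype_prod_eq_prod (𝕜 := ℝ)
      (fun k => (Set.Icc (0:ℝ) 1).indicator (f k))]
  exact Finset.prod_congr rfl fun k _ => integral_indicator measurableSet_Icc

lemma cube_prod_integrable {d : ℕ} (f : Fin d → ℝ → ℝ)
    (hf : ∀ k, IntegrableOn (f k) (Set.Icc (0:ℝ) 1)) :
    IntegrableOn (fun y : Fin d → ℝ => ∏ k, f k (y k))
      (Set.univ.pi (fun _ : Fin d => Set.Icc (0:ℝ) 1)) := by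
  have hS : MeasurableSet (Set.univ.pi (fun _ : Fin d => Set.Icc (0:ℝ) 1)) :=
    MeasurableSet.univ_pi fun _ => measurableSet_Icc
  refine (integrable_indicator_iff hS).1 ?_
  rw [indicator_pi_prod]
  exact Integrable.fintype_prod (𝕜 := ℝ)
    (fun k => (integrable_indicator_iff measurableSet_Icc).2 (hf k))

lemma int_sq : ∫ t in Set.Icc (0:ℝ) 1, t ^ 2 = 1 / 3 := by
  rw [MeasureTheory.integral_Icc_eq_integral_Ioc,
    ← intervalIntegral.integral_of_le (zero_le_one), integral_pow]
  norm_num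

lemma int_step {a : ℝ} (ha : a ∈ Set.Icc (0:ℝ) 1) :
    ∫ t in Set.Icc (0:ℝ) 1, (if a ≤ t then (1:ℝ) else 0) = 1 - a := by
  have h1 : (fun t : ℝ => if a ≤ t then (1:ℝ) else 0)
      = (Set.Ici a).indicator (fun _ => (1:ℝ)) := by
    funext t; simp [Set.indicator_apply, Set.mem_Ici]
  rw [h1, setIntegral_indicator measurableSet_Ici]
  have h2 : Set.Icc (0:ℝ) 1 ∩ Set.Ici a = Set.Icc a 1 := by
    ext t
    simp only [Set.mem_inter_iff, Set.mem_Icc, Set.mem_Ici]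
    constructor
    · rintro ⟨⟨_, ht1⟩, hat⟩; exact ⟨hat, ht1⟩
    · rintro ⟨hat, ht1⟩; exact ⟨⟨ha.1.trans hat, ht1⟩, hat⟩
  rw [h2, setIntegral_const, Real.volume_real_Icc_of_le ha.2, smul_eq_mul, mul_one]

lemma int_step_id {a : ℝ} (ha : a ∈ Set.Icc (0:ℝ) 1) :
    ∫ t in Set.Icc (0:ℝ) 1, (if a ≤ t then (1:ℝ) else 0) * t = (1 - a ^ 2) / 2 := by
  have h1 : (fun t : ℝ => (if a ≤ t then (1:ℝ) else 0) * t)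
      = (Set.Ici a).indicator (fun t => t) := by
    funext t; simp [Set.indicator_apply, Set.mem_Ici]
  rw [h1, setIntegral_indicator measurableSet_Ici]
  have h2 : Set.Icc (0:ℝ) 1 ∩ Set.Ici a = Set.Icc a 1 := by
    ext t
    simp only [Set.mem_inter_iff, Set.mem_Icc, Set.mem_Ici]
    constructor
    · rintro ⟨⟨_, ht1⟩, hat⟩; exact ⟨hat, ht1⟩
    · rintro ⟨hat, ht1⟩; exact ⟨⟨ha.1.trans hat, ht1⟩, hat⟩
  rw [h2, MeasureTheory.integral_Icc_eq_integral_Ioc,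
    ← intervalIntegral.integral_of_le ha.2, integral_id]
  ring

lemma step_integrableOn (a : ℝ) :
    IntegrableOn (fun t : ℝ => if a ≤ t then (1:ℝ) else 0) (Set.Icc (0:ℝ) 1) := by
  have h1 : (fun t : ℝ => if a ≤ t then (1:ℝ) else 0)
      = (Set.Ici a).indicator (fun _ => (1:ℝ)) := by
    funext t; simp [Set.indicator_apply, Set.mem_Ici]
  rw [h1]
  exact (integrableOn_const measure_Icc_lt_top.ne).indicator measurableSet_Ici

lemma step_id_integrableOn (a : ℝ) :
    IntegrableOn (fun t : ℝ => (if a ≤ t then (1:ℝ) else 0) * t) (Set.Icc (0:ℝ) 1) := by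
  have h1 : (fun t : ℝ => (if a ≤ t then (1:ℝ) else 0) * t)
      = (Set.Ici a).indicator (fun t => t) := by
    funext t; simp [Set.indicator_apply, Set.mem_Ici]
  rw [h1]
  exact (continuous_id.integrableOn_Icc).indicator measurableSet_Ici

set_option maxHeartbeats 1000000 in
theorem stmt_5 {N d : ℕ} (hN : 1 ≤ N) (X : Fin N → Fin d → ℝ)
    (hcube : ∀ i : Fin N, ∀ k : Fin d, X i k ∈ Set.Icc (0 : ℝ) 1) :
    ∫ y in Set.univ.pi (fun _ : Fin d => Set.Icc (0 : ℝ) 1),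
        ((1 / N : ℝ) *
            ((Finset.univ.filter (fun i : Fin N => ∀ k : Fin d, X i k ≤ y k)).card : ℝ)
          - ∏ k : Fin d, y k) ^ 2
      = ((1 : ℝ) / 3) ^ d
        - (2 / N : ℝ) * ∑ i : Fin N, ∏ k : Fin d, (1 - (X i k) ^ 2) / 2
        + (1 / (N : ℝ) ^ 2) *
            ∑ i : Fin N, ∑ j : Fin N, ∏ k : Fin d, (1 - max (X i k) (X j k)) := by
  have hN0 : (N : ℝ) ≠ 0 := Nat.cast_ne_zero.2 (by omega)
  -- the count as a sum of products of step functions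
  have hcard : ∀ y : Fin d → ℝ,
      ((Finset.univ.filter (fun i : Fin N => ∀ k : Fin d, X i k ≤ y k)).card : ℝ)
        = ∑ i : Fin N, ∏ k : Fin d, (if X i k ≤ y k then (1:ℝ) else 0) := by
    intro y
    rw [Finset.card_filter]
    push_cast
    refine Finset.sum_congr rfl fun i _ => ?_
    by_cases h : ∀ k, X i k ≤ y k
    · rw [if_pos h]
      exact (Finset.prod_eq_one fun k _ => if_pos (h k)).symm
    · rw [if_neg h]
      obtain ⟨k, hk⟩ := not_forall.mp h
      exact (Finset.prod_eq_zero (Finset.mem_univ k)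
        (if_neg hk : (if X i k ≤ y k then (1:ℝ) else 0) = 0)).symm
  -- pointwise expansion of the square
  have hpt : ∀ y : Fin d → ℝ,
      ((1 / N : ℝ) *
          ((Finset.univ.filter (fun i : Fin N => ∀ k : Fin d, X i k ≤ y k)).card : ℝ)
        - ∏ k : Fin d, y k) ^ 2
      = (1 / (N : ℝ) ^ 2) *
          ∑ i : Fin N, ∑ j : Fin N, ∏ k : Fin d,
            (if max (X i k) (X j k) ≤ y k then (1:ℝ) else 0)
        - (2 / N : ℝ) * ∑ i : Fin N, ∏ k : Fin d,
            ((if X i k ≤ y k then (1:ℝ) else 0) * y k)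
        + ∏ k : Fin d, (y k) ^ 2 := by
    intro y
    rw [hcard y]
    have h1 : (∑ i : Fin N, ∏ k : Fin d, (if X i k ≤ y k then (1:ℝ) else 0)) *
        (∑ j : Fin N, ∏ k : Fin d, (if X j k ≤ y k then (1:ℝ) else 0))
        = ∑ i : Fin N, ∑ j : Fin N, ∏ k : Fin d,
            (if max (X i k) (X j k) ≤ y k then (1:ℝ) else 0) := by
      rw [Finset.sum_mul_sum]
      refine Finset.sum_congr rfl fun i _ => Finset.sum_congr rfl fun j _ => ?_
      rw [← Finset.prod_mul_distrib]
      refine Finset.prod_congr rfl fun k _ => ?_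
      by_cases h1 : X i k ≤ y k <;> by_cases h2 : X j k ≤ y k <;>
        simp [max_le_iff, h1, h2]
    have h2 : (∑ i : Fin N, ∏ k : Fin d, (if X i k ≤ y k then (1:ℝ) else 0)) *
        ∏ k : Fin d, y k
        = ∑ i : Fin N, ∏ k : Fin d, ((if X i k ≤ y k then (1:ℝ) else 0) * y k) := by
      rw [Finset.sum_mul]
      exact Finset.sum_congr rfl fun i _ => (Finset.prod_mul_distrib).symm
    have h3 : (∏ k : Fin d, y k) ^ 2 = ∏ k : Fin d, (y k) ^ 2 :=
      (Finset.prod_pow _ _ _).symm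
    rw [← h1, ← h2, ← h3]
    field_simp
    ring
  simp only [hpt]
  -- integrability of the three pieces
  have hintF : ∀ i j : Fin N, IntegrableOn
      (fun y : Fin d → ℝ => ∏ k : Fin d,
        (if max (X i k) (X j k) ≤ y k then (1:ℝ) else 0))
      (Set.univ.pi (fun _ : Fin d => Set.Icc (0:ℝ) 1)) :=
    fun i j => cube_prod_integrable
      (fun k t => if max (X i k) (X j k) ≤ t then (1:ℝ) else 0)
      fun k => step_integrableOn _
  have hintG : ∀ i : Fin N, IntegrableOn
      (fun y : Fin d → ℝ => ∏ k : Fin d, ((if X i k ≤ y k then (1:ℝ) else 0) * y k))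
      (Set.univ.pi (fun _ : Fin d => Set.Icc (0:ℝ) 1)) :=
    fun i => cube_prod_integrable
      (fun k t => (if X i k ≤ t then (1:ℝ) else 0) * t)
      fun k => step_id_integrableOn _
  have hintH : IntegrableOn (fun y : Fin d → ℝ => ∏ k : Fin d, (y k) ^ 2)
      (Set.univ.pi (fun _ : Fin d => Set.Icc (0:ℝ) 1)) :=
    cube_prod_integrable (fun _ t => t ^ 2)
      fun k => (continuous_id.pow 2).integrableOn_Icc
  have hA : IntegrableOn
      (fun y : Fin d → ℝ => (1 / (N : ℝ) ^ 2) *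
        ∑ i : Fin N, ∑ j : Fin N, ∏ k : Fin d,
          (if max (X i k) (X j k) ≤ y k then (1:ℝ) else 0))
      (Set.univ.pi (fun _ : Fin d => Set.Icc (0:ℝ) 1)) :=
    (integrable_finset_sum _ fun i _ =>
      integrable_finset_sum _ fun j _ => hintF i j).const_mul _
  have hB : IntegrableOn
      (fun y : Fin d → ℝ => (2 / N : ℝ) *
        ∑ i : Fin N, ∏ k : Fin d, ((if X i k ≤ y k then (1:ℝ) else 0) * y k))
      (Set.univ.pi (fun _ : Fin d => Set.Icc (0:ℝ) 1)) :=
    (integrable_finset_sum _ fun i _ => hintG i).const_mul _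
  have hAB : IntegrableOn
      (fun y : Fin d → ℝ =>
        (1 / (N : ℝ) ^ 2) *
          ∑ i : Fin N, ∑ j : Fin N, ∏ k : Fin d,
            (if max (X i k) (X j k) ≤ y k then (1:ℝ) else 0)
        - (2 / N : ℝ) * ∑ i : Fin N, ∏ k : Fin d,
            ((if X i k ≤ y k then (1:ℝ) else 0) * y k))
      (Set.univ.pi (fun _ : Fin d => Set.Icc (0:ℝ) 1)) := hA.sub hB
  rw [integral_add hAB hintH, integral_sub hA hB,
    integral_const_mul, integral_const_mul, integral_finset_sum _ fun i _ => hintG i,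
    integral_finset_sum _ fun i _ => integrable_finset_sum _ fun j _ => hintF i j]
  have hinner : ∀ i : Fin N,
      (∫ y in Set.univ.pi (fun _ : Fin d => Set.Icc (0:ℝ) 1),
        ∑ j : Fin N, ∏ k : Fin d, (if max (X i k) (X j k) ≤ y k then (1:ℝ) else 0))
      = ∑ j : Fin N, ∫ y in Set.univ.pi (fun _ : Fin d => Set.Icc (0:ℝ) 1),
          ∏ k : Fin d, (if max (X i k) (X j k) ≤ y k then (1:ℝ) else 0) :=
    fun i => integral_finset_sum _ fun j _ => hintF i j
  simp only [hinner]
  -- compute the three integrals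
  have eF : ∀ i j : Fin N,
      (∫ y in Set.univ.pi (fun _ : Fin d => Set.Icc (0:ℝ) 1),
        ∏ k : Fin d, (if max (X i k) (X j k) ≤ y k then (1:ℝ) else 0))
      = ∏ k : Fin d, (1 - max (X i k) (X j k)) := by
    intro i j
    rw [cube_prod_integral (fun k t => if max (X i k) (X j k) ≤ t then (1:ℝ) else 0)]
    refine Finset.prod_congr rfl fun k _ => int_step ?_
    exact ⟨le_trans (hcube i k).1 (le_max_left _ _),
      max_le (hcube i k).2 (hcube j k).2⟩
  have eG : ∀ i : Fin N,
      (∫ y in Set.univ.pi (fun _ : Fin d => Set.Icc (0:ℝ) 1),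
        ∏ k : Fin d, ((if X i k ≤ y k then (1:ℝ) else 0) * y k))
      = ∏ k : Fin d, (1 - (X i k) ^ 2) / 2 := by
    intro i
    rw [cube_prod_integral (fun k t => (if X i k ≤ t then (1:ℝ) else 0) * t)]
    exact Finset.prod_congr rfl fun k _ => int_step_id (hcube i k)
  have eH : (∫ y in Set.univ.pi (fun _ : Fin d => Set.Icc (0:ℝ) 1),
        ∏ k : Fin d, (y k) ^ 2) = ((1:ℝ)/3) ^ d := by
    rw [cube_prod_integral (fun _ t => t ^ 2)]
    simp [int_sq]
  simp only [eF, eG, eH]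
  ring
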